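/- If a subalgebra U of M_n(K) has a unity e with e ≠ I (i.e., e ∈ U satisfies eu = ue = u for all u ∈ U but e is not the identity matrix), then the dimension of U over K is at most (n−1)². -/

import Mathlib

/-- If a subalgebra `U` of `Mₙ(K)` has a unity `e ≠ I`, then
`dim U ≤ (n-1)²`. -/
theorem stmt8 (K : Type*) [Field K] [CharZero K] (n : ℕ)
    (U : NonUnitalSubalgebra K (Matrix (Fin n) (Fin n) K))
    (e : Matrix (Fin n) (Fin n) K) (heU : e ∈ U)
    (he : ∀ u ∈ U, e * u = u ∧ u * e = u)
    (hne : e ≠ 1) :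
    Module.finrank K U ≤ (n - 1) ^ 2 := by
  classical
  set eL := Matrix.mulVecLin e with heL
  have hmvinj : Function.Injective (Matrix.mulVecLin :
      Matrix (Fin n) (Fin n) K → ((Fin n → K) →ₗ[K] (Fin n → K))) := by
    intro a b h
    exact Matrix.toLin'.injective
      (by rw [Matrix.toLin'_apply', Matrix.toLin'_apply', h])
  set V := LinearMap.range eL with hV
  -- every u ∈ U maps V into V
  have hmaps : ∀ u ∈ U, ∀ x ∈ V, Matrix.mulVecLin u x ∈ V := by
    intro u hu x hx
    have h1 : e * u = u := (he u hu).1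
    refine ⟨Matrix.mulVecLin u x, ?_⟩
    show e.mulVec (u.mulVec x) = u.mulVec x
    rw [Matrix.mulVec_mulVec, h1]
  -- the restriction map
  let Φ : U →ₗ[K] (V →ₗ[K] V) :=
    { toFun := fun u => LinearMap.restrict (Matrix.mulVecLin (u : Matrix (Fin n) (Fin n) K))
        (hmaps u u.2)
      map_add' := by
        intro a b
        ext x
        simp [LinearMap.restrict_apply]
      map_smul' := by
        intro c a
        ext x
        simp [LinearMap.restrict_apply, Matrix.smul_mulVec] }
  have hΦinj : Function.Injective Φ := by
    rw [injective_iff_map_eq_zero]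
    intro u hu
    ext1
    apply hmvinj
    refine LinearMap.ext fun x => ?_
    have h2 : (u : Matrix (Fin n) (Fin n) K) * e = u := (he u u.2).2
    have hx : Matrix.mulVecLin e x ∈ V := ⟨x, rfl⟩
    have h0 : Φ u ⟨Matrix.mulVecLin e x, hx⟩ = 0 := by rw [hu]; rfl
    have h1 := congrArg Subtype.val h0
    simp only [Φ, LinearMap.coe_mk, AddHom.coe_mk, LinearMap.restrict_apply,
      LinearMap.zero_apply, ZeroMemClass.coe_zero] at h1
    show (u : Matrix (Fin n) (Fin n) K).mulVec x = (0 : Matrix (Fin n) (Fin n) K).mulVec x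
    rw [Matrix.zero_mulVec, ← h2, ← Matrix.mulVec_mulVec]
    exact h1
  -- rank of e is < n
  have hVne : V ≠ ⊤ := by
    intro htop
    apply hne
    have hsurj : Function.Surjective eL := LinearMap.range_eq_top.mp htop
    have hinj : Function.Injective eL :=
      (LinearMap.injective_iff_surjective).mpr hsurj
    have hee : e * e = e := (he e heU).1
    have : eL ∘ₗ eL = eL := by
      rw [heL, ← Matrix.mulVecLin_mul, hee]
    apply hmvinj
    rw [Matrix.mulVecLin_one]
    refine LinearMap.ext fun x => hinj ?_
    exact DFunLike.congr_fun this x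
  have hdimV : Module.finrank K V < n := by
    have := Submodule.finrank_lt (K := K) (V := Fin n → K) hVne
    simpa using this
  have hdimV' : Module.finrank K V ≤ n - 1 := Nat.le_sub_one_of_lt hdimV
  calc Module.finrank K U ≤ Module.finrank K (V →ₗ[K] V) :=
        LinearMap.finrank_le_finrank_of_injective hΦinj
    _ = Module.finrank K V * Module.finrank K V := Module.finrank_linearMap K K ↥V ↥V
    _ ≤ (n - 1) * (n - 1) := Nat.mul_le_mul hdimV' hdimV'
    _ = (n - 1) ^ 2 := (sq (n-1)).symm
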